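/- Let K ⊆ L be finite fields with [L : K] = m, let β be a basis of L over K, and let Φ_β : Lⁿ → K^{n×m} denote the K-linear expansion map sending c = (c₁, …, c_n) to the tuple whose (i, j)-entry is the j-th coordinate of c_i with respect to β. Let C ⊆ Lⁿ be an L-linear code. Then every nonzero vector in the Euclidean dual over K of the expanded code, (Φ_β(C))^⊥ ⊆ K^{n×m}, has Hamming weight at least min{ wt(x) : x ∈ C^⊥, x ≠ 0 }, where C^⊥ is the Euclidean dual of C over L. (This is the parenthetical claim in the proof of Theorem on asymptotically good quantum codes over prime fields: since [β(C₁)]^⊥ = β^⊥(C₁^⊥), the minimum distance of [β(C₁)]^⊥ is at least the minimum distance of C₁^⊥.) -/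

import Mathlib

/-- The Euclidean dual of a code `C ⊆ Rⁱ` (as a set):
all vectors whose standard dot product with every codeword is zero. -/
def eucDual {R : Type*} [CommRing R] {ι : Type*} [Fintype ι] (C : Set (ι → R)) :
    Set (ι → R) :=
  {v | ∀ c ∈ C, ∑ i, v i * c i = 0}

/-- The expansion of a vector `c ∈ Lⁿ` with respect to a `K`-basis `γ` of `L`:
the `(i, j)` entry is the `j`-th coordinate of `c i` with respect to `γ`. -/
noncomputable def expand {K L : Type*} [Field K] [Field L] [Algebra K L] {m : ℕ}
    (γ : Module.Basis (Fin m) K L) {n : ℕ} (c : Fin n → L) : Fin n × Fin m → K :=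
  fun p => γ.repr (c p.1) p.2

/-- Every nonzero vector in the Euclidean dual over `K` of the expanded code
`Φ_β(C) ⊆ K^{n×m}` has Hamming weight at least the minimum weight of a nonzero
vector of the Euclidean dual `C^⊥` of `C` over `L`. -/
theorem dual_expanded_code_min_weight
    (K L : Type*) [Field K] [Field L] [Algebra K L] [Fintype K] [Fintype L]
    [DecidableEq K] [DecidableEq L]
    (m n : ℕ) (hm : Module.finrank K L = m)
    (β : Module.Basis (Fin m) K L) (C : Submodule L (Fin n → L))
    (v : Fin n × Fin m → K)
    (hv : v ∈ eucDual (expand β '' (C : Set (Fin n → L)))) (hv0 : v ≠ 0) :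
    sInf {w | ∃ x ∈ eucDual (C : Set (Fin n → L)), x ≠ 0 ∧ hammingNorm x = w}
      ≤ hammingNorm v := by
  classical
  have hnd := traceForm_nondegenerate K L
  set d : Module.Basis (Fin m) K L := (Algebra.traceForm K L).dualBasis hnd β with hd
  -- key trace formula
  have key : ∀ (j : Fin m) (a : L),
      Algebra.trace K L (d j * a) = β.repr a j := by
    intro j a
    conv_lhs => rw [← β.sum_repr a]
    rw [Finset.mul_sum, map_sum]
    have : ∀ k, Algebra.trace K L (d j * β.repr a k • β k)
        = β.repr a k * (if k = j then 1 else 0) := by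
      intro k
      rw [mul_smul_comm, map_smul, smul_eq_mul]
      congr 1
      have := (Algebra.traceForm K L).apply_dualBasis_left hnd β j k
      simpa [Algebra.traceForm_apply] using this
    simp_rw [this]
    simp
  -- the candidate dual codeword over L
  set x : Fin n → L := fun i => ∑ j, v (i, j) • d j with hx
  have hrepr : ∀ i j, d.repr (x i) j = v (i, j) := by
    intro i j
    exact congrFun (d.repr_sum_self fun j => v (i, j)) j
  -- x is in the Euclidean dual of C over L
  have hxdual : x ∈ eucDual (C : Set (Fin n → L)) := by
    intro c hc
    -- trace of the dot product with any codeword is 0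
    have htr : ∀ c' ∈ C, Algebra.trace K L (∑ i, x i * c' i) = 0 := by
      intro c' hc'
      have hv' := hv (expand β c') ⟨c', hc', rfl⟩
      rw [map_sum]
      have : ∀ i, Algebra.trace K L (x i * c' i)
          = ∑ j, v (i, j) * β.repr (c' i) j := by
        intro i
        rw [hx]
        simp only [Finset.sum_mul, map_sum]
        refine Finset.sum_congr rfl fun j _ => ?_
        rw [smul_mul_assoc, map_smul, smul_eq_mul, key]
      simp_rw [this]
      rw [← Finset.sum_product']
      simpa [expand, Finset.univ_product_univ, Fintype.sum_prod_type] using hv'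
    -- nondegeneracy of the trace form
    refine hnd.1 _ fun α => ?_
    have hαc : (α • c : Fin n → L) ∈ C := C.smul_mem α hc
    have := htr (α • c) hαc
    rw [Algebra.traceForm_apply]
    rw [show (∑ i, x i * c i) * α = ∑ i, x i * (α • c) i by
      rw [Finset.sum_mul]; exact Finset.sum_congr rfl fun i _ => by
        simp [Pi.smul_apply, smul_eq_mul]; ring]
    exact this
  -- x is nonzero
  have hxne : x ≠ 0 := by
    intro h
    apply hv0
    funext p
    have := hrepr p.1 p.2
    rw [h] at this
    simpa using this.symm
  -- weight comparison
  have hwt : hammingNorm x ≤ hammingNorm v := by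
    unfold hammingNorm
    have hj : ∀ i, x i ≠ 0 → ∃ j, v (i, j) ≠ 0 := by
      intro i hi
      by_contra h
      push_neg at h
      apply hi
      rw [hx]
      simp only
      refine Finset.sum_eq_zero fun j _ => by rw [h j, zero_smul]
    have hmpos : 0 < m := by
      rcases Nat.eq_zero_or_pos m with h0 | h; swap; · exact h
      exfalso
      apply hv0
      funext p
      exact absurd p.2.2 (by omega)
    haveI : NeZero m := ⟨hmpos.ne'⟩
    refine Finset.card_le_card_of_injOn
      (fun i => (i, if h : ∃ j, v (i, j) ≠ 0 then h.choose else 0)) ?_ ?_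
    · intro i hi
      simp only [Finset.mem_coe, Finset.mem_filter, Finset.mem_univ, true_and] at hi ⊢
      have h := hj i hi
      rw [dif_pos h]
      exact h.choose_spec
    · intro a _ b _ hab
      exact congrArg Prod.fst hab
  calc sInf {w | ∃ x ∈ eucDual (C : Set (Fin n → L)), x ≠ 0 ∧ hammingNorm x = w}
      ≤ hammingNorm x := Nat.sInf_le ⟨x, hxdual, hxne, rfl⟩
    _ ≤ hammingNorm v := hwt
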